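/- Let θ̂ denote the orthogonal projection of θ onto the closure of the range of T in H, and for each ρ > 0 let u₀(ρ) denote the unique minimizer over U of the functional u ↦ ‖T u − θ‖² + ρ‖u‖². Then ‖T(u₀(ρ)) − θ̂‖ tends to 0 as ρ tends to 0 from the right. -/

import Mathlib

open Filter
open scoped RealInnerProductSpace

/-- Let `θ̂` be the orthogonal projection of `θ` onto the closure of the range of `T`
(characterized as the closest point of that closed subspace to `θ`), and for each
`ρ > 0` let `u₀ ρ` be the minimizer over `U` of `u ↦ ‖T u - θ‖² + ρ‖u‖²`.
Then `‖T (u₀ ρ) - θ̂‖ → 0` as `ρ → 0⁺`. -/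
theorem tendsto_min_residual_to_projection
    {U H : Type*} [NormedAddCommGroup U] [InnerProductSpace ℝ U] [CompleteSpace U]
    [NormedAddCommGroup H] [InnerProductSpace ℝ H] [CompleteSpace H]
    (T : U →L[ℝ] H) (θ : H) (θhat : H)
    (hmem : θhat ∈ closure (Set.range fun u : U => T u))
    (hproj : ∀ w ∈ closure (Set.range fun u : U => T u), ‖θ - θhat‖ ≤ ‖θ - w‖)
    (u₀ : ℝ → U)
    (hopt : ∀ ρ : ℝ, 0 < ρ → ∀ u : U,
      ‖T (u₀ ρ) - θ‖ ^ 2 + ρ * ‖u₀ ρ‖ ^ 2 ≤ ‖T u - θ‖ ^ 2 + ρ * ‖u‖ ^ 2) :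
    Tendsto (fun ρ : ℝ => ‖T (u₀ ρ) - θhat‖) (nhdsWithin 0 (Set.Ioi 0)) (nhds 0) := by
  classical
  set K : Submodule ℝ H := (LinearMap.range (T : U →ₗ[ℝ] H)).topologicalClosure with hK
  have hKcoe : (K : Set H) = closure (Set.range fun u : U => T u) := by
    simp only [hK, Submodule.topologicalClosure_coe, LinearMap.coe_range]
    rfl
  have hmemK : θhat ∈ K := by rw [← hKcoe] at hmem; exact hmem
  have hrangeK : ∀ u : U, T u ∈ K := fun u => by
    rw [← SetLike.mem_coe, hKcoe]
    exact subset_closure ⟨u, rfl⟩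
  -- θhat attains the infimum of distance to K
  have hinf : ‖θ - θhat‖ = ⨅ w : (K : Set H), ‖θ - w‖ := by
    refine le_antisymm (le_ciInf fun w => ?_) ?_
    · exact hproj w (by rw [← hKcoe]; exact w.2)
    · exact ciInf_le ⟨0, fun _ ⟨w, hw⟩ => hw ▸ norm_nonneg _⟩ (⟨θhat, hmemK⟩ : (K : Set H))
  have horth : ∀ w ∈ K, inner ℝ (θ - θhat) w = (0:ℝ) :=
    (Submodule.norm_eq_iInf_iff_real_inner_eq_zero K hmemK).1 hinf
  -- Pythagoras
  have hpyth : ∀ u : U, ‖T u - θ‖ ^ 2 = ‖T u - θhat‖ ^ 2 + ‖θ - θhat‖ ^ 2 := by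
    intro u
    have h1 : T u - θ = (T u - θhat) - (θ - θhat) := by abel
    have h2 : inner ℝ (T u - θhat) (θ - θhat) = (0:ℝ) := by
      rw [real_inner_comm]
      exact horth _ (Submodule.sub_mem K (hrangeK u) hmemK)
    rw [h1, @norm_sub_sq_real, h2]
    ring
  rw [Metric.tendsto_nhdsWithin_nhds]
  intro ε hε
  -- choose u with ‖T u - θhat‖ < ε/2
  obtain ⟨y, ⟨u, hu⟩, hy⟩ := Metric.mem_closure_iff.1 hmem (ε / 2) (by positivity)
  have hTu : ‖T u - θhat‖ < ε / 2 := by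
    rw [← hu] at hy
    simpa [dist_eq_norm, norm_sub_rev] using hy
  refine ⟨ε ^ 2 / 2 / (‖u‖ ^ 2 + 1), by positivity, fun {ρ} hρ hρd => ?_⟩
  have hρ0 : (0 : ℝ) < ρ := hρ
  rw [Real.dist_eq, sub_zero, abs_of_pos hρ0] at hρd
  have key : ‖T (u₀ ρ) - θhat‖ ^ 2 < ε ^ 2 := by
    have h1 := hopt ρ hρ0 u
    have h2 : ρ * ‖u₀ ρ‖ ^ 2 ≥ 0 := by positivity
    have h3 : ‖T (u₀ ρ) - θhat‖ ^ 2 ≤ ‖T u - θhat‖ ^ 2 + ρ * ‖u‖ ^ 2 := by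
      have := hpyth (u₀ ρ)
      have := hpyth u
      nlinarith
    have h4 : ‖T u - θhat‖ ^ 2 < (ε / 2) ^ 2 := by
      have := norm_nonneg (T u - θhat)
      nlinarith
    have h5 : ρ * ‖u‖ ^ 2 < ε ^ 2 / 2 := by
      have h6 : ρ * (‖u‖ ^ 2 + 1) < ε ^ 2 / 2 := by
        rw [← lt_div_iff₀ (by positivity)]
        exact hρd
      nlinarith
    nlinarith
  have : ‖T (u₀ ρ) - θhat‖ < ε := lt_of_pow_lt_pow_left₀ 2 hε.le key
  simpa [Real.dist_eq, abs_of_nonneg (norm_nonneg _)] using this
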